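/- Let r, α, σ with α > r, σ > 0, and let g : ℝ → ℝ ∪ {+∞} be defined by g(x) = x·( r + (α−r)²/(2σ²(1−x)) ) for 0 ≤ x < 1 and g(x) = +∞ otherwise. Then the Legendre–Fenchel transform g*(y) = sup_{x∈ℝ}(xy − g(x)) is given by g*(y) = (√(y−r) − (α−r)/(√2 σ))² for y ≥ z₀ := r + (α−r)²/(2σ²), and g*(y) = 0 for y < z₀. -/

import Mathlib

open Classical in
/-- The Legendre–Fenchel transform of the Merton model value
`g(x) = x(r + (α−r)²/(2σ²(1−x)))` on `[0,1)` (`+∞` elsewhere):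
`g*(y) = (√(y−r) − (α−r)/(√2 σ))²` for `y ≥ z₀ := r + (α−r)²/(2σ²)`, and
`g*(y) = 0` for `y < z₀`. -/
theorem merton_conjugate (r α σ : ℝ) (hα : r < α) (hσ : 0 < σ) :
    let g : ℝ → EReal := fun x =>
      if 0 ≤ x ∧ x < 1 then
        ((x * (r + (α - r) ^ 2 / (2 * σ ^ 2 * (1 - x))) : ℝ) : EReal)
      else ⊤
    let gstar : ℝ → EReal := fun y => ⨆ x : ℝ, ((x * y : ℝ) : EReal) + (-(g x))
    let z₀ : ℝ := r + (α - r) ^ 2 / (2 * σ ^ 2)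
    (∀ y : ℝ, z₀ ≤ y →
      gstar y = (((Real.sqrt (y - r) - (α - r) / (Real.sqrt 2 * σ)) ^ 2 : ℝ) : EReal)) ∧
    (∀ y : ℝ, y < z₀ → gstar y = (0 : EReal)) := by
  intro g gstar z₀
  have hαr : 0 < α - r := sub_pos.mpr hα
  have hσ2 : (0:ℝ) < 2 * σ ^ 2 := by positivity
  set c : ℝ := (α - r) ^ 2 / (2 * σ ^ 2) with hc_def
  have hc : 0 < c := div_pos (by positivity) hσ2
  -- √c = (α−r)/(√2 σ)
  have hsqrt2 : (0:ℝ) < Real.sqrt 2 * σ := by positivity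
  have hd : Real.sqrt c = (α - r) / (Real.sqrt 2 * σ) := by
    have h1 : ((α - r) / (Real.sqrt 2 * σ)) ^ 2 = c := by
      rw [div_pow, mul_pow, Real.sq_sqrt (by norm_num : (2:ℝ) ≥ 0)]
    rw [← h1, Real.sqrt_sq (le_of_lt (div_pos hαr hsqrt2))]
  -- the value of the term inside the sup, for x ∈ [0,1)
  have hterm : ∀ y x, 0 ≤ x → x < 1 →
      ((x * y : ℝ) : EReal) + (-(g x))
        = ((x * y - x * (r + c / (1 - x)) : ℝ) : EReal) := by
    intro y x hx0 hx1
    have hx : 0 ≤ x ∧ x < 1 := ⟨hx0, hx1⟩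
    have h2 : (α - r) ^ 2 / (2 * σ ^ 2 * (1 - x)) = c / (1 - x) := by
      rw [hc_def, div_div]
    simp only [g, if_pos hx, h2]
    norm_cast
  have hterm_out : ∀ y x, ¬(0 ≤ x ∧ x < 1) →
      ((x * y : ℝ) : EReal) + (-(g x)) = ⊥ := by
    intro y x hx
    simp only [g, if_neg hx]
    simp
  constructor
  · -- case y ≥ z₀
    intro y hy
    have hyc : r + c ≤ y := hy
    have hyr : c ≤ y - r := by linarith
    have hyr0 : 0 < y - r := lt_of_lt_of_le hc hyr
    set s : ℝ := Real.sqrt (y - r) with hs_def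
    have hs2 : s ^ 2 = y - r := Real.sq_sqrt hyr0.le
    have hs0 : 0 < s := Real.sqrt_pos.mpr hyr0
    set d : ℝ := Real.sqrt c with hdd
    have hd2 : d ^ 2 = c := Real.sq_sqrt hc.le
    have hd0 : 0 < d := Real.sqrt_pos.mpr hc
    have hds : d ≤ s := Real.sqrt_le_sqrt hyr
    rw [← hd]
    -- show the sup equals (s - d)^2
    show (⨆ x : ℝ, ((x * y : ℝ) : EReal) + (-(g x))) = (((s - d) ^ 2 : ℝ) : EReal)
    apply le_antisymm
    · apply iSup_le
      intro x
      by_cases hx : 0 ≤ x ∧ x < 1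
      · rw [hterm y x hx.1 hx.2]
        rw [EReal.coe_le_coe_iff]
        have ht : 0 < 1 - x := by linarith [hx.2]
        have hy2 : y = s ^ 2 + r := by rw [hs2]; ring
        have hc2 : c = d ^ 2 := hd2.symm
        rw [hy2, hc2]
        rw [show x * (s ^ 2 + r) - x * (r + d ^ 2 / (1 - x))
              = s ^ 2 * x - d ^ 2 * x / (1 - x) from by ring]
        rw [sub_le_iff_le_add, ← sub_le_iff_le_add', le_div_iff₀ ht]
        nlinarith [sq_nonneg (s * (1 - x) - d)]
      · rw [hterm_out y x hx]; exact bot_le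
    · -- witness x* = 1 - d/s
      set x₀ : ℝ := 1 - d / s with hx0_def
      have hds' : d / s ≤ 1 := (div_le_one hs0).mpr hds
      have hds0 : 0 < d / s := div_pos hd0 hs0
      have hx00 : 0 ≤ x₀ := by simp only [hx0_def]; linarith
      have hx01 : x₀ < 1 := by simp only [hx0_def]; linarith
      have h1x : 1 - x₀ = d / s := by simp only [hx0_def]; ring
      have heq : x₀ * y - x₀ * (r + c / (1 - x₀)) = (s - d) ^ 2 := by
        rw [h1x]
        have hcd : c / (d / s) = d * s := by
          rw [← hd2]; field_simp
        rw [hcd]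
        have : x₀ * y - x₀ * (r + d * s) = x₀ * ((y - r) - d * s) := by ring
        rw [this, ← hs2, hx0_def]
        field_simp
      calc (((s - d) ^ 2 : ℝ) : EReal) = ((x₀ * y : ℝ) : EReal) + (-(g x₀)) := by
            rw [hterm y x₀ hx00 hx01, heq]
        _ ≤ ⨆ x : ℝ, ((x * y : ℝ) : EReal) + (-(g x)) :=
            le_iSup (fun x => ((x * y : ℝ) : EReal) + (-(g x))) x₀
  · -- case y < z₀
    intro y hy
    have hyc : y < r + c := hy
    show (⨆ x : ℝ, ((x * y : ℝ) : EReal) + (-(g x))) = (0 : EReal)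
    apply le_antisymm
    · apply iSup_le
      intro x
      by_cases hx : 0 ≤ x ∧ x < 1
      · rw [hterm y x hx.1 hx.2]
        have : ((0:ℝ) : EReal) = (0 : EReal) := rfl
        rw [← this, EReal.coe_le_coe_iff]
        have ht : 0 < 1 - x := by linarith [hx.2]
        have hct : c / (1 - x) * (1 - x) = c := div_mul_cancel₀ c ht.ne'
        nlinarith [hx.1, mul_nonneg hx.1 ht.le, mul_nonneg hx.1 hc.le]
      · rw [hterm_out y x hx]; exact bot_le
    · have h0 : ((0 : ℝ) * y - (0:ℝ) * (r + c / (1 - 0)) : ℝ) = 0 := by ring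
      calc (0 : EReal) = (((0:ℝ) * y - (0:ℝ) * (r + c / (1 - 0)) : ℝ) : EReal) := by
            rw [h0]; rfl
        _ = (((0:ℝ) * y : ℝ) : EReal) + (-(g 0)) := (hterm y 0 le_rfl one_pos).symm
        _ ≤ ⨆ x : ℝ, ((x * y : ℝ) : EReal) + (-(g x)) :=
            le_iSup (fun x => ((x * y : ℝ) : EReal) + (-(g x))) 0
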